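/- Let A be a complex n×n matrix with I - A·conj(A) invertible, and let J be the ℝ-linear map Ju = i(I - A·conj(A))⁻¹[(I + A·conj(A))u - 2A·conj(u)]. Then J_st + J is invertible, and the anti-linear map Q defined by Qv = A·conj(v) satisfies Q = (J_st + J)⁻¹(J_st - J). -/
import Mathlib


open Complex Matrix

/-- Entrywise complex conjugate of a matrix. -/
def matConj {n : ℕ} (A : Matrix (Fin n) (Fin n) ℂ) : Matrix (Fin n) (Fin n) ℂ :=
  A.map (starRingEnd ℂ)

/-- Componentwise complex conjugate of a vector in `ℂⁿ`. -/
def vecConj {n : ℕ} (u : Fin n → ℂ) : Fin n → ℂ := fun j => (starRingEnd ℂ) (u j)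

lemma vecConj_mulVec {n : ℕ} (M : Matrix (Fin n) (Fin n) ℂ) (x : Fin n → ℂ) :
    vecConj (M *ᵥ x) = matConj M *ᵥ vecConj x := by
  funext j
  simp [vecConj, matConj, Matrix.mulVec, dotProduct, map_sum]

lemma vecConj_vecConj {n : ℕ} (v : Fin n → ℂ) : vecConj (vecConj v) = v := by
  funext j; simp [vecConj]

/-- for `A` with `I - A conj A` invertible and
`J u = i (I - A conj A)⁻¹ [(I + A conj A) u - 2 A conj u]`, the map `J_st + J`
is invertible and the anti-linear map `Q v = A · conj v` satisfies
`Q = (J_st + J)⁻¹ (J_st - J)`, i.e. `(J_st + J) ∘ Q = J_st - J`. -/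
theorem stmt2 (n : ℕ) (A : Matrix (Fin n) (Fin n) ℂ)
    (hdet : (1 - A * matConj A).det ≠ 0)
    (J : (Fin n → ℂ) → (Fin n → ℂ))
    (hJ : ∀ u, J u = Complex.I •
      ((1 - A * matConj A)⁻¹ *ᵥ ((1 + A * matConj A) *ᵥ u - (2 : ℂ) • (A *ᵥ vecConj u)))) :
    Function.Bijective (fun u => Complex.I • u + J u) ∧
      ∀ v : Fin n → ℂ,
        Complex.I • (A *ᵥ vecConj v) + J (A *ᵥ vecConj v) = Complex.I • v - J v := by
  set B := A * matConj A with hBdef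
  have hU : IsUnit (1 - B).det := isUnit_iff_ne_zero.mpr hdet
  have hC : ∀ x : Fin n → ℂ, (1 - B)⁻¹ *ᵥ ((1 - B) *ᵥ x) = x := by
    intro x
    rw [Matrix.mulVec_mulVec, Matrix.nonsing_inv_mul _ hU, Matrix.one_mulVec]
  have hC' : ∀ x : Fin n → ℂ, (1 - B) *ᵥ ((1 - B)⁻¹ *ᵥ x) = x := by
    intro x
    rw [Matrix.mulVec_mulVec, Matrix.mul_nonsing_inv _ hU, Matrix.one_mulVec]
  -- Q² = B
  have hQ2 : ∀ x : Fin n → ℂ, A *ᵥ vecConj (A *ᵥ vecConj x) = B *ᵥ x := by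
    intro x
    rw [vecConj_mulVec, vecConj_vecConj, Matrix.mulVec_mulVec]
  -- formula for (J_st + J) u
  have hF : ∀ u : Fin n → ℂ, Complex.I • u + J u
      = (2 * Complex.I) • ((1 - B)⁻¹ *ᵥ (u - A *ᵥ vecConj u)) := by
    intro u
    have hu : Complex.I • u = Complex.I • ((1 - B)⁻¹ *ᵥ ((1 - B) *ᵥ u)) := by rw [hC]
    rw [hJ, hu, ← smul_add, ← Matrix.mulVec_add]
    have : (1 - B) *ᵥ u + ((1 + B) *ᵥ u - (2:ℂ) • (A *ᵥ vecConj u))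
        = (2:ℂ) • (u - A *ᵥ vecConj u) := by
      rw [Matrix.sub_mulVec, Matrix.add_mulVec, Matrix.one_mulVec]
      module
    rw [this, Matrix.mulVec_smul, smul_smul]
    ring_nf
  -- formula for (J_st - J) u
  have hG : ∀ u : Fin n → ℂ, Complex.I • u - J u
      = (2 * Complex.I) • ((1 - B)⁻¹ *ᵥ (A *ᵥ vecConj u - B *ᵥ u)) := by
    intro u
    have hu : Complex.I • u = Complex.I • ((1 - B)⁻¹ *ᵥ ((1 - B) *ᵥ u)) := by rw [hC]
    rw [hJ, hu, ← smul_sub, ← Matrix.mulVec_sub]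
    have : (1 - B) *ᵥ u - ((1 + B) *ᵥ u - (2:ℂ) • (A *ᵥ vecConj u))
        = (2:ℂ) • (A *ᵥ vecConj u - B *ᵥ u) := by
      rw [Matrix.sub_mulVec, Matrix.add_mulVec, Matrix.one_mulVec]
      module
    rw [this, Matrix.mulVec_smul, smul_smul]
    ring_nf
  have h2I : (2 * Complex.I) ≠ 0 := by
    simp [Complex.I_ne_zero]
  constructor
  · constructor
    · -- injective
      intro u v huv
      simp only [hF] at huv
      -- reduce to the case v = 0 by working with w = u - v? Easier: direct
      have h1 : (1 - B)⁻¹ *ᵥ (u - A *ᵥ vecConj u) = (1 - B)⁻¹ *ᵥ (v - A *ᵥ vecConj v) :=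
        smul_right_injective _ h2I huv
      have h2 : u - A *ᵥ vecConj u = v - A *ᵥ vecConj v := by
        have := congrArg (fun x => (1 - B) *ᵥ x) h1
        simpa [hC'] using this
      -- so u - v = A conj (u - v)
      have h3 : u - v = A *ᵥ vecConj (u - v) := by
        have : vecConj (u - v) = vecConj u - vecConj v := by
          funext j; simp [vecConj]
        rw [this, Matrix.mulVec_sub]
        have := sub_eq_sub_iff_sub_eq_sub.mp h2
        linear_combination (norm := module) this
      have h4 : u - v = B *ᵥ (u - v) := by
        have h3' := congrArg (fun y => A *ᵥ vecConj y) h3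
        exact h3.trans (h3'.trans (hQ2 _))
      have h5 : (1 - B) *ᵥ (u - v) = 0 := by
        rw [Matrix.sub_mulVec, Matrix.one_mulVec, ← h4]
        simp
      have h6 : u - v = 0 := by
        have := congrArg (fun x => (1 - B)⁻¹ *ᵥ x) h5
        simpa [hC] using this
      exact sub_eq_zero.mp h6
    · -- surjective
      intro w
      set x : Fin n → ℂ := (2 * Complex.I)⁻¹ • w with hx
      refine ⟨x + A *ᵥ vecConj x, ?_⟩
      simp only [hF]
      have hconj : vecConj (x + A *ᵥ vecConj x) = vecConj x + vecConj (A *ᵥ vecConj x) := by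
        funext j; simp [vecConj]
      have key : (x + A *ᵥ vecConj x) - A *ᵥ vecConj (x + A *ᵥ vecConj x)
          = (1 - B) *ᵥ x := by
        rw [hconj, Matrix.mulVec_add, hQ2, Matrix.sub_mulVec, Matrix.one_mulVec]
        module
      rw [key, hC, hx, smul_smul, mul_inv_cancel₀ h2I, one_smul]
  · intro v
    rw [hF, hG, hQ2]
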